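/- arXiv:1906.10265 — 5 statements merged into one kernel-verified Lean document; each statement's English description precedes it below -/
import Mathlib

section
/- If σ is a greedy ordering of E, then for every ordering τ of E the commonality index of σ is at most that of τ, i.e., c(σ) ≤ c(τ); in other words, every greedy ordering achieves the minimum commonality index over all orderings of E. -/
/-- Effective commonality of position `i` in ordering `σ`:
`W_σ(i) = ∑_{j < i} w(σ i, σ j)`. -/
noncomputable def effComm {E : Type*} {n : ℕ} (w : E → E → ℝ) (σ : Fin n ≃ E)
    (i : Fin n) : ℝ :=
  ∑ j ∈ Finset.Iio i, w (σ i) (σ j)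

/-- Commonality index of ordering `σ`: the maximum effective commonality
over all positions (equal to `0` when `n = 0`). -/
noncomputable def commIdx {E : Type*} {n : ℕ} (w : E → E → ℝ) (σ : Fin n ≃ E) : ℝ :=
  ⨆ i : Fin n, effComm w σ i

/-- `σ` is a greedy ordering: for every position `i` and every element `e` of
the prefix set `S_i = {σ j : j ≤ i}`, we have
`W_σ(i) ≤ ∑_{e' ∈ S_i, e' ≠ e} w(e, e')`. -/
def Greedy {E : Type*} {n : ℕ} [DecidableEq E] (w : E → E → ℝ) (σ : Fin n ≃ E) : Prop :=
  ∀ i : Fin n, ∀ e ∈ (Finset.Iic i).image σ,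
    effComm w σ i ≤ ∑ e' ∈ ((Finset.Iic i).image σ).erase e, w e e'

/-- Every greedy ordering achieves the minimum commonality index over all
orderings of `E`. -/
theorem greedy_ordering_minimizes_commIdx
    {E : Type*} [DecidableEq E] {n : ℕ} (w : E → E → ℝ)
    (hw : ∀ e e', 0 ≤ w e e')
    (σ : Fin n ≃ E) (hσ : Greedy w σ) :
    ∀ τ : Fin n ≃ E, commIdx w σ ≤ commIdx w τ := by
  intro τ
  rcases isEmpty_or_nonempty (Fin n) with h | h
  · simp [commIdx, Real.iSup_of_isEmpty]
  · refine ciSup_le fun i => ?_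
    set S : Finset E := (Finset.Iic i).image σ with hS
    set T : Finset (Fin n) := (Finset.Iic i).image (fun j => τ.symm (σ j)) with hT
    have hTne : T.Nonempty := ⟨τ.symm (σ i), Finset.mem_image.2 ⟨i, Finset.mem_Iic.2 le_rfl, rfl⟩⟩
    set k : Fin n := T.max' hTne with hk
    have hkmem : k ∈ T := T.max'_mem hTne
    obtain ⟨j0, hj0, hj0eq⟩ := Finset.mem_image.1 hkmem
    set e : E := τ k with he
    have heS : e ∈ S := by
      refine Finset.mem_image.2 ⟨j0, hj0, ?_⟩
      rw [he, ← hj0eq, Equiv.apply_symm_apply]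
    have hsub : S.erase e ⊆ (Finset.Iio k).image τ := by
      intro e' he'
      obtain ⟨hne, he'S⟩ := Finset.mem_erase.1 he'
      obtain ⟨j, hj, hje⟩ := Finset.mem_image.1 he'S
      have hmem : τ.symm e' ∈ T := Finset.mem_image.2 ⟨j, hj, by rw [hje]⟩
      have hle : τ.symm e' ≤ k := T.le_max' _ hmem
      have hlt : τ.symm e' < k := lt_of_le_of_ne hle (by
        intro hcon
        apply hne
        rw [he, ← hcon, Equiv.apply_symm_apply])
      exact Finset.mem_image.2 ⟨τ.symm e', Finset.mem_Iio.2 hlt, Equiv.apply_symm_apply τ e'⟩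
    have step1 : effComm w σ i ≤ ∑ e' ∈ S.erase e, w e e' := hσ i e heS
    have step2 : ∑ e' ∈ S.erase e, w e e' ≤ ∑ e' ∈ (Finset.Iio k).image τ, w e e' :=
      Finset.sum_le_sum_of_subset_of_nonneg hsub (fun x _ _ => hw e x)
    have step3 : ∑ e' ∈ (Finset.Iio k).image τ, w e e' = effComm w τ k := by
      rw [effComm, Finset.sum_image (fun a _ b _ hab => τ.injective hab), he]
    have step4 : effComm w τ k ≤ commIdx w τ :=
      le_ciSup (Set.Finite.bddAbove (Set.finite_range _)) k
    linarith
end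

section
/- (Exchange lemma.) Let σ be a greedy ordering of E and τ an ordering of E with τ ≠ σ, let i_max be the largest position with σ(i_max) ≠ τ(i_max), let j be the unique position with τ(j) = σ(i_max), and let τ' be the ordering obtained from τ by the exchange move. Then the commonality index of τ' is at most that of τ: c(τ') ≤ c(τ). -/
private lemma effComm_eq_sum_image {E : Type*} [DecidableEq E] {n : ℕ} (w : E → E → ℝ)
    (σ : Fin n ≃ E) (i : Fin n) :
    effComm w σ i = ∑ e ∈ (Finset.Iio i).image σ, w (σ i) e :=
  (Finset.sum_image (fun _ _ _ _ h => σ.injective h)).symm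

private lemma image_Iio_eq_erase {E : Type*} [DecidableEq E] {n : ℕ} (σ : Fin n ≃ E)
    (i : Fin n) :
    (Finset.Iio i).image σ = ((Finset.Iic i).image σ).erase (σ i) := by
  rw [← Finset.Iio_insert, Finset.image_insert, Finset.erase_insert]
  simp only [Finset.mem_image, Finset.mem_Iio, not_exists, not_and]
  intro k hk h
  exact absurd (σ.injective h) (ne_of_lt hk)

/-- Exchange lemma: if `σ` is greedy, `τ ≠ σ`, `imax` is the largest position where
`σ` and `τ` disagree, `j` is the (unique) position with `τ j = σ imax`, and `τ'` is
obtained from `τ` by the exchange move, then `c(τ') ≤ c(τ)`. -/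
theorem commIdx_exchange_le
    {E : Type*} [DecidableEq E] {n : ℕ} (w : E → E → ℝ)
    (hw : ∀ e e', 0 ≤ w e e')
    (σ τ τ' : Fin n ≃ E) (hσ : Greedy w σ) (hne : σ ≠ τ)
    (imax j : Fin n)
    (himax_ne : σ imax ≠ τ imax)
    (himax_max : ∀ i : Fin n, imax < i → σ i = τ i)
    (hj : τ j = σ imax)
    (hjlt : j < imax)
    (hτ'_lo : ∀ i : Fin n, i < j → τ' i = τ i)
    (hτ'_hi : ∀ i : Fin n, imax < i → τ' i = τ i)
    (hτ'_mid : ∀ i : Fin n, j ≤ i → ∀ h2 : i < imax,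
      τ' i = τ ⟨(i : ℕ) + 1, Nat.lt_of_le_of_lt (Nat.succ_le_of_lt (Fin.lt_def.mp h2)) imax.isLt⟩)
    (hτ'_imax : τ' imax = τ j) :
    commIdx w τ' ≤ commIdx w τ := by
  have : Nonempty (Fin n) := ⟨imax⟩
  have hbdd : BddAbove (Set.range fun i => effComm w τ i) := (Set.finite_range _).bddAbove
  have hle : ∀ i : Fin n, effComm w τ i ≤ commIdx w τ := fun i => le_ciSup hbdd i
  -- Lemma A : images of Iic imax under τ and σ agree
  have hA : (Finset.Iic imax).image τ = (Finset.Iic imax).image σ := by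
    ext e
    simp only [Finset.mem_image, Finset.mem_Iic]
    constructor
    · rintro ⟨k, hk, rfl⟩
      refine ⟨σ.symm (τ k), ?_, σ.apply_symm_apply _⟩
      by_contra h
      have h' : imax < σ.symm (τ k) := lt_of_not_ge h
      have h2 := himax_max _ h'
      rw [σ.apply_symm_apply] at h2
      have h3 := τ.injective h2
      rw [← h3] at h'
      exact absurd hk (not_le_of_gt h')
    · rintro ⟨k, hk, rfl⟩
      refine ⟨τ.symm (σ k), ?_, τ.apply_symm_apply _⟩
      by_contra h
      have h' : imax < τ.symm (σ k) := lt_of_not_ge h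
      have h2 := himax_max _ h'
      rw [τ.apply_symm_apply] at h2
      have h3 := σ.injective h2.symm
      rw [← h3] at h'
      exact absurd hk (not_le_of_gt h')
  refine ciSup_le fun i => ?_
  by_cases h1 : i < j
  · -- positions below j: unchanged
    have : effComm w τ' i = effComm w τ i := by
      unfold effComm
      rw [hτ'_lo i h1]
      refine Finset.sum_congr rfl fun k hk => ?_
      rw [hτ'_lo k (lt_trans (Finset.mem_Iio.mp hk) h1)]
    rw [this]; exact hle i
  · push_neg at h1
    by_cases h2 : i < imax
    · -- middle positions
      set i1 : Fin n := ⟨(i : ℕ) + 1,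
        Nat.lt_of_le_of_lt (Nat.succ_le_of_lt (Fin.lt_def.mp h2)) imax.isLt⟩ with hi1
      have hτ'i : τ' i = τ i1 := hτ'_mid i h1 h2
      have hsub : (Finset.Iio i).image τ' ⊆ (Finset.Iio i1).image τ := by
        intro e he
        rcases Finset.mem_image.mp he with ⟨k, hk, rfl⟩
        have hki : k < i := Finset.mem_Iio.mp hk
        rcases lt_or_ge k j with hkj | hkj
        · rw [hτ'_lo k hkj]
          exact Finset.mem_image.mpr ⟨k, Finset.mem_Iio.mpr
            (Fin.lt_def.mpr (Nat.lt_succ_of_lt (Fin.lt_def.mp hki))), rfl⟩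
        · rw [hτ'_mid k hkj (lt_trans hki h2)]
          exact Finset.mem_image.mpr ⟨_, Finset.mem_Iio.mpr
            (Fin.lt_def.mpr (Nat.succ_lt_succ (Fin.lt_def.mp hki))), rfl⟩
      calc effComm w τ' i = ∑ e ∈ (Finset.Iio i).image τ', w (τ i1) e := by
              rw [effComm_eq_sum_image, hτ'i]
        _ ≤ ∑ e ∈ (Finset.Iio i1).image τ, w (τ i1) e :=
              Finset.sum_le_sum_of_subset_of_nonneg hsub (fun e _ _ => hw _ _)
        _ = effComm w τ i1 := (effComm_eq_sum_image w τ i1).symm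
        _ ≤ commIdx w τ := hle i1
    · push_neg at h2
      rcases eq_or_lt_of_le h2 with heq | hgt
      · -- i = imax
        subst heq
        have hE1 : (Finset.Iio imax).image τ' = ((Finset.Iic imax).image σ).erase (σ imax) := by
          apply Finset.eq_of_subset_of_card_le
          · intro e he
            rcases Finset.mem_image.mp he with ⟨k, hk, rfl⟩
            have hki : k < imax := Finset.mem_Iio.mp hk
            rcases lt_or_ge k j with hkj | hkj
            · rw [hτ'_lo k hkj]
              refine Finset.mem_erase.mpr ⟨?_, ?_⟩
              · rw [← hj]; exact fun h => absurd (τ.injective h) (ne_of_lt hkj)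
              · rw [← hA]; exact Finset.mem_image.mpr ⟨k, Finset.mem_Iic.mpr (le_of_lt hki), rfl⟩
            · rw [hτ'_mid k hkj hki]
              refine Finset.mem_erase.mpr ⟨?_, ?_⟩
              · rw [← hj]
                intro h
                have h4 := τ.injective h
                have h5 : (k : ℕ) + 1 = (j : ℕ) := by
                  simpa [Fin.ext_iff] using h4
                have h6 : (j : ℕ) ≤ (k : ℕ) := Fin.le_def.mp hkj
                omega
              · rw [← hA]
                exact Finset.mem_image.mpr ⟨_, Finset.mem_Iic.mpr
                  (Fin.le_def.mpr (Nat.succ_le_of_lt (Fin.lt_def.mp hki))), rfl⟩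
          · rw [Finset.card_erase_of_mem (Finset.mem_image.mpr
              ⟨imax, Finset.mem_Iic.mpr le_rfl, rfl⟩)]
            rw [Finset.card_image_of_injective _ σ.injective,
              Finset.card_image_of_injective _ τ'.injective, Fin.card_Iic, Fin.card_Iio]
            omega
        have hτ'i : τ' imax = σ imax := by rw [hτ'_imax, hj]
        have step1 : effComm w τ' imax = effComm w σ imax := by
          rw [effComm_eq_sum_image, effComm_eq_sum_image, hτ'i, hE1, image_Iio_eq_erase]
        have hmem : τ imax ∈ (Finset.Iic imax).image σ := by
          rw [← hA]; exact Finset.mem_image.mpr ⟨imax, Finset.mem_Iic.mpr le_rfl, rfl⟩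
        have step2 := hσ imax (τ imax) hmem
        have step3 : ∑ e ∈ ((Finset.Iic imax).image σ).erase (τ imax), w (τ imax) e
            = effComm w τ imax := by
          rw [effComm_eq_sum_image, ← hA, image_Iio_eq_erase]
        calc effComm w τ' imax = effComm w σ imax := step1
          _ ≤ _ := step2
          _ = effComm w τ imax := step3
          _ ≤ commIdx w τ := hle imax
      · -- imax < i
        have hE1 : (Finset.Iio i).image τ' = (Finset.Iio i).image τ := by
          apply Finset.eq_of_subset_of_card_le
          · intro e he
            rcases Finset.mem_image.mp he with ⟨k, hk, rfl⟩
            have hki : k < i := Finset.mem_Iio.mp hk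
            rcases lt_or_ge k j with hkj | hkj
            · rw [hτ'_lo k hkj]
              exact Finset.mem_image.mpr ⟨k, hk, rfl⟩
            · rcases lt_trichotomy k imax with hkm | hkm | hkm
              · rw [hτ'_mid k hkj hkm]
                refine Finset.mem_image.mpr ⟨_, Finset.mem_Iio.mpr ?_, rfl⟩
                exact Fin.lt_def.mpr (Nat.lt_of_le_of_lt
                  (Nat.succ_le_of_lt (Fin.lt_def.mp hkm)) (Fin.lt_def.mp hgt))
              · subst hkm
                rw [hτ'_imax]
                exact Finset.mem_image.mpr ⟨j, Finset.mem_Iio.mpr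
                  (lt_trans hjlt hki), rfl⟩
              · rw [hτ'_hi k hkm]
                exact Finset.mem_image.mpr ⟨k, hk, rfl⟩
          · rw [Finset.card_image_of_injective _ τ.injective,
              Finset.card_image_of_injective _ τ'.injective]
        have hτ'i : τ' i = τ i := hτ'_hi i hgt
        have : effComm w τ' i = effComm w τ i := by
          rw [effComm_eq_sum_image, effComm_eq_sum_image, hτ'i, hE1]
        rw [this]; exact hle i
end

section
/- With σ, τ, i_max, j, τ' as above, for every position i with j ≤ i < i_max (the elements shifted down by the exchange move), the effective commonality satisfies W_{τ'}(i) = W_τ(i+1) − w(τ(i+1), τ(j)); in particular, since w is nonnegative, W_{τ'}(i) ≤ W_τ(i+1). -/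
/-- For every position `i` with `j ≤ i < imax` (the elements shifted down by the
exchange move), `W_{τ'}(i) = W_τ(i+1) − w(τ(i+1), τ(j))`; in particular, since `w`
is nonnegative, `W_{τ'}(i) ≤ W_τ(i+1)`. -/
theorem effComm_exchange_shifted
    {E : Type*} [DecidableEq E] {n : ℕ} (w : E → E → ℝ)
    (hw : ∀ e e', 0 ≤ w e e')
    (σ τ τ' : Fin n ≃ E) (hne : σ ≠ τ)
    (imax j : Fin n)
    (himax_ne : σ imax ≠ τ imax)
    (himax_max : ∀ i : Fin n, imax < i → σ i = τ i)
    (hj : τ j = σ imax)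
    (hjlt : j < imax)
    (hτ'_lo : ∀ i : Fin n, i < j → τ' i = τ i)
    (hτ'_hi : ∀ i : Fin n, imax < i → τ' i = τ i)
    (hτ'_mid : ∀ i : Fin n, j ≤ i → ∀ h2 : i < imax,
      τ' i = τ ⟨(i : ℕ) + 1, Nat.lt_of_le_of_lt (Nat.succ_le_of_lt (Fin.lt_def.mp h2)) imax.isLt⟩)
    (hτ'_imax : τ' imax = τ j) :
    ∀ i : Fin n, j ≤ i → ∀ h2 : i < imax,
      effComm w τ' i =
        effComm w τ ⟨(i : ℕ) + 1,
            Nat.lt_of_le_of_lt (Nat.succ_le_of_lt (Fin.lt_def.mp h2)) imax.isLt⟩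
          - w (τ ⟨(i : ℕ) + 1,
                Nat.lt_of_le_of_lt (Nat.succ_le_of_lt (Fin.lt_def.mp h2)) imax.isLt⟩) (τ j)
      ∧ effComm w τ' i ≤
          effComm w τ ⟨(i : ℕ) + 1,
            Nat.lt_of_le_of_lt (Nat.succ_le_of_lt (Fin.lt_def.mp h2)) imax.isLt⟩ := by
  intro i hji h2
  set i1 : Fin n := ⟨(i : ℕ) + 1,
    Nat.lt_of_le_of_lt (Nat.succ_le_of_lt (Fin.lt_def.mp h2)) imax.isLt⟩ with hi1
  have hji' : (j : ℕ) ≤ (i : ℕ) := hji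
  have hiimax : (i : ℕ) < (imax : ℕ) := h2
  have himaxn : (imax : ℕ) < n := imax.isLt
  have key : effComm w τ' i = ∑ k ∈ (Finset.Iio i1).erase j, w (τ i1) (τ k) := by
    unfold effComm
    refine Finset.sum_nbij'
      (i := fun k : Fin n => if (k : ℕ) < (j : ℕ) then k else
        if h : (k : ℕ) + 1 < n then ⟨(k : ℕ) + 1, h⟩ else k)
      (j := fun k : Fin n => if (k : ℕ) ≤ (j : ℕ) then k else
        ⟨(k : ℕ) - 1, Nat.lt_of_le_of_lt (Nat.sub_le _ _) k.isLt⟩)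
      ?_ ?_ ?_ ?_ ?_
    · intro k hk
      rw [Finset.mem_Iio] at hk
      have hki : (k : ℕ) < (i : ℕ) := hk
      by_cases hkj : (k : ℕ) < (j : ℕ)
      · simp only [hkj, if_true]
        rw [Finset.mem_erase, Finset.mem_Iio]
        exact ⟨fun h => absurd (congrArg Fin.val h) (by omega), by
          simp only [Fin.lt_def, hi1]; omega⟩
      · have hk1 : (k : ℕ) + 1 < n := by omega
        simp only [hkj, if_false, hk1, dif_pos]
        rw [Finset.mem_erase, Finset.mem_Iio]
        exact ⟨fun h => absurd (congrArg Fin.val h) (by simp; omega), by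
          simp only [Fin.lt_def, hi1]; omega⟩
    · intro k hk
      rw [Finset.mem_erase, Finset.mem_Iio] at hk
      obtain ⟨hkj, hki1⟩ := hk
      have hki1' : (k : ℕ) < (i : ℕ) + 1 := hki1
      have hkj' : (k : ℕ) ≠ (j : ℕ) := fun h => hkj (Fin.ext h)
      by_cases hle : (k : ℕ) ≤ (j : ℕ)
      · simp only [hle, if_true, Finset.mem_Iio, Fin.lt_def]; omega
      · simp only [hle, if_false, Finset.mem_Iio, Fin.lt_def]; omega
    · intro k hk
      rw [Finset.mem_Iio] at hk
      have hki : (k : ℕ) < (i : ℕ) := hk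
      by_cases hkj : (k : ℕ) < (j : ℕ)
      · simp [hkj, Nat.le_of_lt hkj]
      · have hk1 : (k : ℕ) + 1 < n := by omega
        simp only [hkj, if_false, hk1, dif_pos]
        have : ¬ ((k : ℕ) + 1 ≤ (j : ℕ)) := by omega
        simp [this]
    · intro k hk
      rw [Finset.mem_erase, Finset.mem_Iio] at hk
      obtain ⟨hkj, hki1⟩ := hk
      have hkj' : (k : ℕ) ≠ (j : ℕ) := fun h => hkj (Fin.ext h)
      by_cases hle : (k : ℕ) ≤ (j : ℕ)
      · have : (k : ℕ) < (j : ℕ) := by omega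
        simp [hle, this]
      · have h1 : (k : ℕ) - 1 + 1 < n := by omega
        have h2' : ¬ ((k : ℕ) - 1 < (j : ℕ)) := by omega
        simp only [hle, if_false, h2', if_false, h1, dif_pos]
        exact Fin.ext (by simp; omega)
    · intro k hk
      rw [Finset.mem_Iio] at hk
      have hki : (k : ℕ) < (i : ℕ) := hk
      have hτ'i : τ' i = τ i1 := hτ'_mid i hji h2
      rw [hτ'i]
      by_cases hkj : (k : ℕ) < (j : ℕ)
      · simp only [hkj, if_true]
        rw [hτ'_lo k hkj]
      · have hk1 : (k : ℕ) + 1 < n := by omega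
        simp only [hkj, if_false, hk1, dif_pos]
        have hjk : j ≤ k := by omega
        have hkm : k < imax := by simp only [Fin.lt_def]; omega
        rw [hτ'_mid k hjk hkm]
  have hjmem : j ∈ Finset.Iio i1 := by
    rw [Finset.mem_Iio]; simp only [Fin.lt_def, hi1]; omega
  have hsum : effComm w τ i1 =
      w (τ i1) (τ j) + ∑ k ∈ (Finset.Iio i1).erase j, w (τ i1) (τ k) := by
    unfold effComm
    rw [← Finset.add_sum_erase _ _ hjmem]
  constructor
  · rw [key, hsum]; ring
  · rw [key, hsum]
    have := hw (τ i1) (τ j)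
    linarith
end

section
/- With σ, τ, i_max, j, τ' as above, let S = {τ(i) : i ≤ i_max} be the prefix set at position i_max (which equals {σ(i) : i ≤ i_max} because σ and τ agree at all positions strictly greater than i_max). Then the effective commonality of the moved element satisfies W_{τ'}(i_max) = Σ_{e ∈ S, e ≠ τ(j)} w(τ(j), e), and if σ is greedy then W_{τ'}(i_max) ≤ W_τ(i_max). -/
/-- Let `S = {τ i : i ≤ imax}` be the prefix set at position `imax`. Then the
effective commonality of the moved element satisfies
`W_{τ'}(imax) = ∑_{e ∈ S, e ≠ τ j} w(τ j, e)`, and if `σ` is greedy then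
`W_{τ'}(imax) ≤ W_τ(imax)`. -/
theorem effComm_exchange_moved
    {E : Type*} [DecidableEq E] {n : ℕ} (w : E → E → ℝ)
    (hw : ∀ e e', 0 ≤ w e e')
    (σ τ τ' : Fin n ≃ E) (hne : σ ≠ τ)
    (imax j : Fin n)
    (himax_ne : σ imax ≠ τ imax)
    (himax_max : ∀ i : Fin n, imax < i → σ i = τ i)
    (hj : τ j = σ imax)
    (hjlt : j < imax)
    (hτ'_lo : ∀ i : Fin n, i < j → τ' i = τ i)
    (hτ'_hi : ∀ i : Fin n, imax < i → τ' i = τ i)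
    (hτ'_mid : ∀ i : Fin n, j ≤ i → ∀ h2 : i < imax,
      τ' i = τ ⟨(i : ℕ) + 1, Nat.lt_of_le_of_lt (Nat.succ_le_of_lt (Fin.lt_def.mp h2)) imax.isLt⟩)
    (hτ'_imax : τ' imax = τ j) :
    effComm w τ' imax =
        ∑ e ∈ ((Finset.Iic imax).image τ).erase (τ j), w (τ j) e
      ∧ (Greedy w σ → effComm w τ' imax ≤ effComm w τ imax) := by

  classical
  -- The prefix sets of σ and τ at imax coincide.
  have hS : (Finset.Iic imax).image σ = (Finset.Iic imax).image τ := by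
    ext e
    simp only [Finset.mem_image, Finset.mem_Iic]
    constructor
    · rintro ⟨i, hi, rfl⟩
      by_cases h : τ.symm (σ i) ≤ imax
      · exact ⟨τ.symm (σ i), h, τ.apply_symm_apply _⟩
      · push_neg at h
        have h1 : σ (τ.symm (σ i)) = σ i :=
          (himax_max _ h).trans (τ.apply_symm_apply _)
        have hi' : τ.symm (σ i) = i := σ.injective h1
        rw [hi'] at h
        exact absurd hi (not_le.mpr h)
    · rintro ⟨i, hi, rfl⟩
      by_cases h : σ.symm (τ i) ≤ imax
      · exact ⟨σ.symm (τ i), h, σ.apply_symm_apply _⟩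
      · push_neg at h
        have h1 : τ (σ.symm (τ i)) = τ i :=
          (himax_max _ h).symm.trans (σ.apply_symm_apply _)
        have hi' : σ.symm (τ i) = i := τ.injective h1
        rw [hi'] at h
        exact absurd hi (not_le.mpr h)
  have hIio : ∀ (ρ : Fin n ≃ E) (i : Fin n),
      ((Finset.Iic i).image ρ).erase (ρ i) = (Finset.Iio i).image ρ := by
    intro ρ i
    rw [← Finset.Iio_insert, Finset.image_insert, Finset.erase_insert]
    simp only [Finset.mem_image, Finset.mem_Iio, not_exists]
    rintro x ⟨hx, hxe⟩
    exact absurd (ρ.injective hxe) hx.ne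
  -- key image computation
  have hkey : (Finset.Iio imax).image τ' = ((Finset.Iic imax).image τ).erase (τ j) := by
    ext e
    simp only [Finset.mem_image, Finset.mem_erase, Finset.mem_Iio, Finset.mem_Iic]
    constructor
    · rintro ⟨i, hi, rfl⟩
      by_cases h : i < j
      · rw [hτ'_lo i h]
        exact ⟨fun he => absurd (τ.injective he) h.ne, i, hi.le, rfl⟩
      · push_neg at h
        rw [hτ'_mid i h hi]
        refine ⟨fun he => ?_, ⟨(i : ℕ) + 1, _⟩, ?_, rfl⟩
        · have := τ.injective he
          have : (i : ℕ) + 1 = (j : ℕ) := congrArg Fin.val this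
          have hji : (j : ℕ) ≤ (i : ℕ) := h
          omega
        · have : (i : ℕ) < (imax : ℕ) := hi
          exact Fin.mk_le_of_le_val (by omega)
    · rintro ⟨hne', k, hk, rfl⟩
      have hkj : k ≠ j := fun h => hne' (by rw [h])
      rcases lt_or_gt_of_ne hkj with h | h
      · exact ⟨k, h.trans hjlt, hτ'_lo k h⟩
      · have hk1 : 1 ≤ (k : ℕ) := by
          have : (j : ℕ) < (k : ℕ) := h
          omega
        have hkim : (k : ℕ) ≤ (imax : ℕ) := hk
        have hjk : (j : ℕ) < (k : ℕ) := h
        refine ⟨⟨(k : ℕ) - 1, by omega⟩, ?_, ?_⟩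
        · exact Fin.lt_def.mpr (show (k : ℕ) - 1 < (imax : ℕ) by omega)
        · have hjle : j ≤ (⟨(k : ℕ) - 1, by omega⟩ : Fin n) :=
            Fin.le_def.mpr (show (j : ℕ) ≤ (k : ℕ) - 1 by omega)
          have hlt : (⟨(k : ℕ) - 1, by omega⟩ : Fin n) < imax :=
            Fin.lt_def.mpr (show (k : ℕ) - 1 < (imax : ℕ) by omega)
          rw [hτ'_mid _ hjle hlt]
          congr 1
          apply Fin.ext
          show (k : ℕ) - 1 + 1 = (k : ℕ)
          omega
  have hinj : ∀ (ρ : Fin n ≃ E) (s : Finset (Fin n)) (g : E → ℝ),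
      ∑ e ∈ s.image ρ, g e = ∑ i ∈ s, g (ρ i) := by
    intro ρ s g
    exact Finset.sum_image (fun a _ b _ h => ρ.injective h)
  have h1 : effComm w τ' imax =
      ∑ e ∈ ((Finset.Iic imax).image τ).erase (τ j), w (τ j) e := by
    rw [← hkey, hinj τ' (Finset.Iio imax) (fun e => w (τ j) e)]
    unfold effComm
    rw [hτ'_imax]
  refine ⟨h1, fun hg => ?_⟩
  have hmem : τ imax ∈ (Finset.Iic imax).image σ := by
    rw [hS]; exact Finset.mem_image_of_mem _ (Finset.mem_Iic.mpr le_rfl)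
  have hg2 := hg imax (τ imax) hmem
  have hσeq : effComm w σ imax = effComm w τ' imax := by
    rw [h1, ← hS, hj, hIio σ imax, hinj σ (Finset.Iio imax) (fun e => w (σ imax) e)]
    rfl
  have hτeq : ∑ e' ∈ ((Finset.Iic imax).image σ).erase (τ imax), w (τ imax) e' =
      effComm w τ imax := by
    rw [hS, hIio τ imax, hinj τ (Finset.Iio imax) (fun e => w (τ imax) e)]
    rfl
  calc effComm w τ' imax = effComm w σ imax := hσeq.symm
    _ ≤ _ := hg2
    _ = effComm w τ imax := hτeq
end

section
/- Let σ be a greedy ordering of E and τ any ordering of E. Then there exist s ≤ n and a sequence of orderings τ_0 = τ, τ_1, …, τ_s = σ such that for each k < s, τ_{k+1} is obtained from τ_k by an exchange move (with respect to σ) and c(τ_{k+1}) ≤ c(τ_k); in particular c(σ) ≤ c(τ). -/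
/-- `τ'` is obtained from `τ` by the exchange move with respect to the target
ordering `σ`: `imax` is the largest position where `σ` and `τ` disagree, `j` is
the position with `τ j = σ imax`, elements at positions `j ≤ i < imax` are
shifted down by one, and `τ j` is moved to position `imax`. -/
def IsExchangeMove {E : Type*} {n : ℕ} (σ τ τ' : Fin n ≃ E) : Prop :=
  ∃ imax j : Fin n,
    σ imax ≠ τ imax ∧ (∀ i : Fin n, imax < i → σ i = τ i) ∧
    τ j = σ imax ∧ j < imax ∧
    (∀ i : Fin n, i < j → τ' i = τ i) ∧
    (∀ i : Fin n, imax < i → τ' i = τ i) ∧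
    (∀ i : Fin n, j ≤ i → ∀ h2 : i < imax,
      τ' i = τ ⟨(i : ℕ) + 1,
        Nat.lt_of_le_of_lt (Nat.succ_le_of_lt (Fin.lt_def.mp h2)) imax.isLt⟩) ∧
    τ' imax = τ j

private def shiftFun {n : ℕ} (j imax : Fin n) : Fin n → Fin n := fun i =>
  if (i:ℕ) < (j:ℕ) then i
  else if h : (i:ℕ) < (imax:ℕ) then ⟨(i:ℕ)+1, by have := imax.isLt; omega⟩
  else if (i:ℕ) = (imax:ℕ) then j else i

private lemma shiftFun_lt {n : ℕ} {j imax : Fin n} {i : Fin n} (h : (i:ℕ) < (j:ℕ)) :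
    shiftFun j imax i = i := by simp [shiftFun, h]

private lemma shiftFun_mid {n : ℕ} {j imax : Fin n} {i : Fin n}
    (h1 : (j:ℕ) ≤ (i:ℕ)) (h2 : (i:ℕ) < (imax:ℕ)) :
    shiftFun j imax i = ⟨(i:ℕ)+1, by have := imax.isLt; omega⟩ := by
  simp only [shiftFun]
  rw [if_neg (by omega), dif_pos h2]

private lemma shiftFun_imax {n : ℕ} {j imax : Fin n} (hj : (j:ℕ) < (imax:ℕ)) :
    shiftFun j imax imax = j := by
  simp only [shiftFun]
  rw [if_neg (by omega), dif_neg (by omega)]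
  simp

private lemma shiftFun_gt {n : ℕ} {j imax : Fin n} (hj : (j:ℕ) < (imax:ℕ)) {i : Fin n} (h : (imax:ℕ) < (i:ℕ)) :
    shiftFun j imax i = i := by
  simp only [shiftFun]
  rw [if_neg (by omega), dif_neg (by omega), if_neg (by omega)]

private lemma shiftFun_injective {n : ℕ} {j imax : Fin n} (hj : (j:ℕ) < (imax:ℕ)) :
    Function.Injective (shiftFun j imax) := by
  intro a b hab
  simp only [shiftFun] at hab
  split_ifs at hab <;>
    (apply Fin.ext; have h' := congrArg Fin.val hab; simp (failIfUnchanged := false) at h'; omega)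

section Step
variable {E : Type*} [DecidableEq E] {n : ℕ}

private lemma effComm_le_commIdx (w : E → E → ℝ) (σ : Fin n ≃ E) (i : Fin n) :
    effComm w σ i ≤ commIdx w σ :=
  le_ciSup (Set.finite_range _).bddAbove i

private lemma exchange_step (w : E → E → ℝ) (hw : ∀ e e', 0 ≤ w e e')
    (σ : Fin n ≃ E) (hσ : Greedy w σ) (τ : Fin n ≃ E) (imax : Fin n)
    (h1 : σ imax ≠ τ imax) (h2 : ∀ i : Fin n, imax < i → σ i = τ i) :
    ∃ τ' : Fin n ≃ E, IsExchangeMove σ τ τ' ∧ commIdx w τ' ≤ commIdx w τ ∧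
      ∀ i : Fin n, (imax:ℕ) ≤ (i:ℕ) → σ i = τ' i := by
  classical
  set j : Fin n := τ.symm (σ imax) with hjdef
  have hj : τ j = σ imax := τ.apply_symm_apply _
  have hjlt : (j:ℕ) < (imax:ℕ) := by
    rcases lt_trichotomy ((j:ℕ)) ((imax:ℕ)) with h | h | h
    · exact h
    · exfalso; apply h1; rw [← hj]; congr 1; exact Fin.ext h
    · exfalso
      have hji := h2 j (Fin.lt_def.mpr h)
      rw [hj] at hji
      have hij : imax = j := σ.injective hji.symm
      exact absurd (congrArg Fin.val hij) (by omega)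
  have hfinj : Function.Injective (shiftFun j imax) := shiftFun_injective hjlt
  have hfbij : Function.Bijective (shiftFun j imax) :=
    Finite.injective_iff_bijective.mp hfinj
  set τ' : Fin n ≃ E := (Equiv.ofBijective _ hfbij).trans τ with hτ'def
  have hτ' : ∀ i, τ' i = τ (shiftFun j imax i) := fun i => rfl
  -- prefix set equality
  have hAB : (Finset.Iic imax).image σ = (Finset.Iic imax).image τ := by
    apply Finset.eq_of_subset_of_card_le
    · intro e he
      simp only [Finset.mem_image, Finset.mem_Iic] at he ⊢
      obtain ⟨i, hi, rfl⟩ := he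
      refine ⟨τ.symm (σ i), ?_, τ.apply_symm_apply _⟩
      by_contra hk
      have hk' : imax < τ.symm (σ i) := lt_of_not_ge hk
      have hag := h2 _ hk'
      rw [τ.apply_symm_apply] at hag
      have hik : τ.symm (σ i) = i := σ.injective hag
      rw [hik] at hk'
      exact absurd hi (not_le.mpr hk')
    · rw [Finset.card_image_of_injective _ τ.injective,
          Finset.card_image_of_injective _ σ.injective]
  refine ⟨τ', ⟨imax, j, h1, h2, hj, Fin.lt_def.mpr hjlt, ?_, ?_, ?_, ?_⟩, ?_, ?_⟩
  · intro i hi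
    rw [hτ', shiftFun_lt (Fin.lt_def.mp hi)]
  · intro i hi
    rw [hτ', shiftFun_gt hjlt (Fin.lt_def.mp hi)]
  · intro i hi1 hi2
    rw [hτ', shiftFun_mid (Fin.le_def.mp hi1) (Fin.lt_def.mp hi2)]
  · rw [hτ', shiftFun_imax hjlt]
  · -- commIdx
    have hne : Nonempty (Fin n) := ⟨imax⟩
    apply ciSup_le
    intro i
    rcases lt_or_ge ((i:ℕ)) ((j:ℕ)) with hc1 | hc1
    · -- i < j
      have he : effComm w τ' i = effComm w τ i := by
        unfold effComm
        rw [hτ', shiftFun_lt hc1]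
        refine Finset.sum_congr rfl fun k hk => ?_
        rw [hτ', shiftFun_lt (lt_trans (Fin.lt_def.mp (Finset.mem_Iio.mp hk)) hc1)]
      rw [he]; exact effComm_le_commIdx w τ i
    rcases lt_trichotomy ((i:ℕ)) ((imax:ℕ)) with hc2 | hc2 | hc2
    · -- j ≤ i < imax
      set i1 : Fin n := ⟨(i:ℕ)+1, by have := imax.isLt; omega⟩ with hi1def
      have e1 : effComm w τ' i = ∑ m ∈ (Finset.Iio i).image (shiftFun j imax), w (τ i1) (τ m) := by
        unfold effComm
        rw [Finset.sum_image (fun a _ b _ h => hfinj h)]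
        refine Finset.sum_congr rfl fun k hk => ?_
        rw [hτ', hτ', shiftFun_mid hc1 hc2]
      have hsub : (Finset.Iio i).image (shiftFun j imax) ⊆ Finset.Iio i1 := by
        intro m hm
        simp only [Finset.mem_image, Finset.mem_Iio] at hm ⊢
        obtain ⟨k, hk, rfl⟩ := hm
        have hk' : (k:ℕ) < (i:ℕ) := Fin.lt_def.mp hk
        rcases lt_or_ge ((k:ℕ)) ((j:ℕ)) with h | h
        · rw [shiftFun_lt h]; exact Fin.lt_def.mpr (by simp [hi1def]; omega)
        · rw [shiftFun_mid h (by omega)]; exact Fin.lt_def.mpr (by simp [hi1def]; omega)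
      calc effComm w τ' i = _ := e1
        _ ≤ ∑ m ∈ Finset.Iio i1, w (τ i1) (τ m) :=
            Finset.sum_le_sum_of_subset_of_nonneg hsub (fun _ _ _ => hw _ _)
        _ = effComm w τ i1 := rfl
        _ ≤ commIdx w τ := effComm_le_commIdx w τ i1
    · -- i = imax
      have hii : i = imax := Fin.ext hc2
      subst hii
      have e1 : effComm w τ' i = ∑ m ∈ (Finset.Iio i).image (shiftFun j i), w (σ i) (τ m) := by
        unfold effComm
        rw [Finset.sum_image (fun a _ b _ h => hfinj h)]
        refine Finset.sum_congr rfl fun k hk => ?_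
        rw [hτ', hτ', shiftFun_imax hjlt, hj]
      have hsub : (Finset.Iio i).image (shiftFun j i) ⊆ (Finset.Iic i).erase j := by
        intro m hm
        simp only [Finset.mem_image, Finset.mem_Iio] at hm
        obtain ⟨k, hk, rfl⟩ := hm
        have hk' : (k:ℕ) < (i:ℕ) := Fin.lt_def.mp hk
        simp only [Finset.mem_erase, Finset.mem_Iic]
        rcases lt_or_ge ((k:ℕ)) ((j:ℕ)) with h | h
        · rw [shiftFun_lt h]
          exact ⟨fun e => absurd (congrArg Fin.val e) (by omega), Fin.le_def.mpr (by omega)⟩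
        · rw [shiftFun_mid h hk']
          exact ⟨fun e => absurd (congrArg Fin.val e) (by simp; omega), Fin.le_def.mpr (by simp; omega)⟩
      have e2 : ∑ m ∈ (Finset.Iic i).erase j, w (σ i) (τ m)
          = ∑ e ∈ ((Finset.Iic i).image σ).erase (σ i), w (σ i) e := by
        rw [hAB, ← hj, ← Finset.image_erase τ.injective,
            Finset.sum_image (fun a _ b _ h => τ.injective h)]
      have e3 : ∑ e ∈ ((Finset.Iic i).image σ).erase (σ i), w (σ i) e
          = effComm w σ i := by
        rw [← Finset.image_erase σ.injective, Finset.Iic_erase,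
            Finset.sum_image (fun a _ b _ h => σ.injective h)]
        rfl
      have e4 : effComm w σ i ≤ effComm w τ i := by
        have hmem : τ i ∈ (Finset.Iic i).image σ := by
          rw [hAB]; exact Finset.mem_image_of_mem _ (Finset.mem_Iic.mpr le_rfl)
        refine le_trans (hσ i (τ i) hmem) (le_of_eq ?_)
        rw [hAB, ← Finset.image_erase τ.injective, Finset.Iic_erase,
            Finset.sum_image (fun a _ b _ h => τ.injective h)]
        rfl
      calc effComm w τ' i = _ := e1
        _ ≤ ∑ m ∈ (Finset.Iic i).erase j, w (σ i) (τ m) :=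
            Finset.sum_le_sum_of_subset_of_nonneg hsub (fun _ _ _ => hw _ _)
        _ = _ := e2
        _ = _ := e3
        _ ≤ _ := e4
        _ ≤ commIdx w τ := effComm_le_commIdx w τ i
    · -- imax < i
      have e1 : effComm w τ' i = ∑ m ∈ (Finset.Iio i).image (shiftFun j imax), w (τ i) (τ m) := by
        unfold effComm
        rw [Finset.sum_image (fun a _ b _ h => hfinj h)]
        refine Finset.sum_congr rfl fun k hk => ?_
        rw [hτ', hτ', shiftFun_gt hjlt hc2]
      have hsub : (Finset.Iio i).image (shiftFun j imax) ⊆ Finset.Iio i := by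
        intro m hm
        simp only [Finset.mem_image, Finset.mem_Iio] at hm ⊢
        obtain ⟨k, hk, rfl⟩ := hm
        have hk' : (k:ℕ) < (i:ℕ) := Fin.lt_def.mp hk
        rcases lt_or_ge ((k:ℕ)) ((j:ℕ)) with h | h
        · rw [shiftFun_lt h]; exact hk
        rcases lt_trichotomy ((k:ℕ)) ((imax:ℕ)) with h3 | h3 | h3
        · rw [shiftFun_mid h h3]; exact Fin.lt_def.mpr (by simp; omega)
        · rw [show k = imax from Fin.ext h3, shiftFun_imax hjlt]
          exact Fin.lt_def.mpr (by omega)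
        · rw [shiftFun_gt hjlt h3]; exact hk
      calc effComm w τ' i = _ := e1
        _ ≤ ∑ m ∈ Finset.Iio i, w (τ i) (τ m) :=
            Finset.sum_le_sum_of_subset_of_nonneg hsub (fun _ _ _ => hw _ _)
        _ = effComm w τ i := rfl
        _ ≤ commIdx w τ := effComm_le_commIdx w τ i
  · -- agreement above imax
    intro i hi
    rcases eq_or_lt_of_le hi with h | h
    · have hii : i = imax := Fin.ext h.symm
      subst hii
      rw [hτ', shiftFun_imax hjlt, hj]
    · rw [hτ', shiftFun_gt hjlt h]
      exact h2 i (Fin.lt_def.mpr h)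


private lemma key_induction (w : E → E → ℝ) (hw : ∀ e e', 0 ≤ w e e')
    (σ : Fin n ≃ E) (hσ : Greedy w σ) :
    ∀ m : ℕ, ∀ τ : Fin n ≃ E, (∀ i : Fin n, m ≤ (i:ℕ) → σ i = τ i) →
    ∃ s : ℕ, s ≤ m ∧ ∃ c : ℕ → (Fin n ≃ E),
      c 0 = τ ∧ c s = σ ∧
      (∀ k < s, IsExchangeMove σ (c k) (c (k + 1)) ∧
        commIdx w (c (k + 1)) ≤ commIdx w (c k)) ∧
      commIdx w σ ≤ commIdx w τ := by
  intro m
  induction m with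
  | zero =>
    intro τ hτ
    have hστ : σ = τ := Equiv.ext fun i => hτ i (Nat.zero_le _)
    exact ⟨0, le_rfl, fun _ => τ, rfl, hστ.symm, fun k hk => absurd hk (Nat.not_lt_zero k),
      le_of_eq (by rw [hστ])⟩
  | succ m ih =>
    intro τ hτ
    by_cases hστ : σ = τ
    · exact ⟨0, Nat.zero_le _, fun _ => τ, rfl, hστ.symm,
        fun k hk => absurd hk (Nat.not_lt_zero k), le_of_eq (by rw [hστ])⟩
    · have hne : (Finset.univ.filter (fun i : Fin n => σ i ≠ τ i)).Nonempty := by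
        by_contra hemp
        apply hστ
        apply Equiv.ext
        intro i
        by_contra hne2
        exact hemp ⟨i, Finset.mem_filter.mpr ⟨Finset.mem_univ i, hne2⟩⟩
      set imax := (Finset.univ.filter (fun i : Fin n => σ i ≠ τ i)).max' hne with himaxdef
      have h1 : σ imax ≠ τ imax := by
        have := (Finset.univ.filter (fun i : Fin n => σ i ≠ τ i)).max'_mem hne
        exact (Finset.mem_filter.mp this).2
      have h2 : ∀ i : Fin n, imax < i → σ i = τ i := by
        intro i hi
        by_contra hne2
        have hmem : i ∈ Finset.univ.filter (fun i : Fin n => σ i ≠ τ i) :=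
          Finset.mem_filter.mpr ⟨Finset.mem_univ i, hne2⟩
        exact absurd (Finset.le_max' _ i hmem) (not_le.mpr hi)
      have himle : (imax:ℕ) ≤ m := by
        by_contra hgt
        exact h1 (hτ imax (by omega))
      obtain ⟨τ', hmove, hci, hagree⟩ := exchange_step w hw σ hσ τ imax h1 h2
      obtain ⟨s, hs, c, hc0, hcs, hstep, hciσ⟩ := ih τ' (fun i hi => hagree i (by omega))
      refine ⟨s + 1, by omega, fun k => match k with | 0 => τ | k + 1 => c k, rfl, hcs, ?_, ?_⟩
      · intro k hk
        match k with
        | 0 =>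
          refine ⟨?_, ?_⟩
          · show IsExchangeMove σ τ (c 0)
            rw [hc0]; exact hmove
          · show commIdx w (c 0) ≤ commIdx w τ
            rw [hc0]; exact hci
        | k + 1 => exact hstep k (by omega)
      · exact le_trans hciσ hci

end Step

/-- For a greedy ordering `σ` and any ordering `τ`, there is a sequence of at
most `n` exchange moves transforming `τ` into `σ` without ever increasing the
commonality index; in particular `c(σ) ≤ c(τ)`. -/
theorem exists_exchange_sequence_to_greedy
    {E : Type*} [DecidableEq E] {n : ℕ} (w : E → E → ℝ)
    (hw : ∀ e e', 0 ≤ w e e')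
    (σ : Fin n ≃ E) (hσ : Greedy w σ) (τ : Fin n ≃ E) :
    ∃ s : ℕ, s ≤ n ∧ ∃ c : ℕ → (Fin n ≃ E),
      c 0 = τ ∧ c s = σ ∧
      (∀ k < s, IsExchangeMove σ (c k) (c (k + 1)) ∧
        commIdx w (c (k + 1)) ≤ commIdx w (c k)) ∧
      commIdx w σ ≤ commIdx w τ := by
  obtain ⟨s, hs, hrest⟩ := key_induction w hw σ hσ n τ
    (fun i hi => absurd i.isLt (not_lt.mpr hi))
  exact ⟨s, hs, hrest⟩
end
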